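/- arXiv:1908.05706 — 2 statements merged into one kernel-verified Lean document; each statement's English description precedes it below -/
import Mathlib

section
/- For every graph G, pw(G) ≤ GMh(G): if G has a grid-major representation of height H, then the pathwidth of G is at most H. -/
open SimpleGraph

/-- The `W × H` grid graph: vertices are the grid points `Fin W × Fin H`, with an
edge between any two grid points at distance exactly one. -/
def gridGraph (W H : ℕ) : SimpleGraph (Fin W × Fin H) where
  Adj p q :=
    (p.1 = q.1 ∧ (p.2.val + 1 = q.2.val ∨ q.2.val + 1 = p.2.val)) ∨
    (p.2 = q.2 ∧ (p.1.val + 1 = q.1.val ∨ q.1.val + 1 = p.1.val))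
  symm := by
    constructor
    rintro p q (⟨h1, h2⟩ | ⟨h1, h2⟩)
    · exact Or.inl ⟨h1.symm, h2.symm⟩
    · exact Or.inr ⟨h1.symm, h2.symm⟩
  loopless := by
    constructor
    rintro p (⟨_, h⟩ | ⟨_, h⟩) <;> omega

/-- A grid-major representation of `G` of height `H`: a labeling of the grid points of
a `W × H` grid (`W ≥ 1`) by vertices of `G` such that every vertex is used, the grid
points carrying a fixed vertex induce a connected subgraph of the grid, and every edge
of `G` is witnessed by a grid edge. -/
def IsGridMajorRep {V : Type*} (G : SimpleGraph V) (W H : ℕ)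
    (lab : Fin W × Fin H → V) : Prop :=
  1 ≤ W ∧
  Function.Surjective lab ∧
  (∀ v : V, ((gridGraph W H).induce {p | lab p = v}).Connected) ∧
  (∀ v w : V, G.Adj v w →
    ∃ p q : Fin W × Fin H, (gridGraph W H).Adj p q ∧ lab p = v ∧ lab q = w)

/-- A simple grid-major representation: in every column, the grid points labeled by
any fixed vertex are consecutive. -/
def IsSimpleGridMajorRep {V : Type*} (G : SimpleGraph V) (W H : ℕ)
    (lab : Fin W × Fin H → V) : Prop :=
  IsGridMajorRep G W H lab ∧
  ∀ (c : Fin W) (v : V) (r₁ r₂ r₃ : Fin H), r₁ ≤ r₂ → r₂ ≤ r₃ →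
    lab (c, r₁) = v → lab (c, r₃) = v → lab (c, r₂) = v

/-- The grid-major height `GMh(G)`: the least height of a grid-major representation. -/
noncomputable def gridMajorHeight {V : Type*} (G : SimpleGraph V) : ℕ :=
  sInf {H | ∃ W lab, IsGridMajorRep G W H lab}

/-- The simple grid-major height `sGMh(G)`. -/
noncomputable def simpleGridMajorHeight {V : Type*} (G : SimpleGraph V) : ℕ :=
  sInf {H | ∃ W lab, IsSimpleGridMajorRep G W H lab}

/-- A path decomposition of `G` with bags `X 0, …, X (L-1)`. -/
def IsPathDecomposition {V : Type*} (G : SimpleGraph V) (L : ℕ)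
    (X : Fin L → Finset V) : Prop :=
  (∀ v : V, ∃ i, v ∈ X i) ∧
  (∀ (v : V) (i j k : Fin L), i ≤ j → j ≤ k → v ∈ X i → v ∈ X k → v ∈ X j) ∧
  (∀ v w : V, G.Adj v w → ∃ i, v ∈ X i ∧ w ∈ X i)

/-- The pathwidth of a graph: the least width (maximum bag size minus one) of a
path decomposition. -/
noncomputable def pathwidth {V : Type*} (G : SimpleGraph V) : ℕ :=
  sInf {k | ∃ (L : ℕ) (X : Fin L → Finset V),
    IsPathDecomposition G L X ∧ ∀ i, (X i).card ≤ k + 1}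

namespace GridMajorAux

/-- The column-major index of a grid point. -/
def key {W H : ℕ} (p : Fin W × Fin H) : ℕ := p.1.val * H + p.2.val

lemma key_lt {W H : ℕ} (p : Fin W × Fin H) : key p < W * H :=
  calc key p = p.1.val * H + p.2.val := rfl
    _ < p.1.val * H + H := Nat.add_lt_add_left p.2.isLt _
    _ = (p.1.val + 1) * H := by ring
    _ ≤ W * H := Nat.mul_le_mul_right H p.1.isLt

lemma key_injective {W H : ℕ} : Function.Injective (key (W := W) (H := H)) := by
  intro p q h
  have hp2 := p.2.isLt
  have hq2 := q.2.isLt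
  have hH : 0 < H := Nat.lt_of_le_of_lt (Nat.zero_le _) hp2
  have h2 : p.2.val = q.2.val := by
    have := congrArg (· % H) h
    simpa [key, Nat.mul_add_mod_of_lt hp2, Nat.mul_add_mod_of_lt hq2] using this
  have h1 : p.1.val = q.1.val := by
    have hmul : p.1.val * H = q.1.val * H := by
      unfold key at h; omega
    exact Nat.eq_of_mul_eq_mul_right hH hmul
  exact Prod.ext (Fin.ext h1) (Fin.ext h2)

lemma key_adj {W H : ℕ} {p q : Fin W × Fin H} (h : (gridGraph W H).Adj p q) :
    key q ≤ key p + H := by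
  have hp2 := p.2.isLt
  have hq2 := q.2.isLt
  unfold key
  obtain ⟨h1, h2⟩ | ⟨h1, h2⟩ := h
  · have e : q.1.val * H = p.1.val * H := by rw [h1]
    omega
  · have e2 : p.2.val = q.2.val := by rw [h1]
    rcases h2 with h2 | h2
    · have e : q.1.val * H = p.1.val * H + H := by rw [← h2]; ring
      omega
    · have e : p.1.val * H = q.1.val * H + H := by rw [← h2]; ring
      omega

/-- Along a walk in the induced subgraph on `S`, if no cell of `S` has `j` in its
key-interval `[key r, key r + H]`..., smallness of key is preserved. -/
lemma walk_key_lt {W H : ℕ} {S : Set (Fin W × Fin H)} {j : ℕ}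
    (hS : ∀ r ∈ S, ¬ (key r ≤ j + H ∧ j ≤ key r)) :
    ∀ {a b : ↥S}, ((gridGraph W H).induce S).Walk a b →
      key a.val < j → key b.val < j := by
  intro a b w
  induction w with
  | nil => exact id
  | @cons u c b h w ih =>
      intro ha
      have hadj : (gridGraph W H).Adj u.val c.val := h
      have hle : key c.val ≤ key u.val + H := key_adj hadj
      have hc : key c.val < j := by
        by_contra hcon
        exact hS c.val c.property ⟨by omega, by omega⟩
      exact ih hc

end GridMajorAux

/-- `pw(G) ≤ GMh(G)`: if a graph has a grid-major representation of
height `H`, then its pathwidth is at most `H`. -/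
theorem pathwidth_le_of_gridMajor {V : Type*} (G : SimpleGraph V) (W H : ℕ)
    (lab : Fin W × Fin H → V) (hrep : IsGridMajorRep G W H lab) :
    pathwidth G ≤ H := by
  classical
  open GridMajorAux in
  obtain ⟨hW, hsurj, hconn, hedge⟩ := hrep
  apply Nat.sInf_le
  refine ⟨W * H, fun i =>
      (Finset.univ.filter
        (fun p : Fin W × Fin H => GridMajorAux.key p ≤ i.val + H ∧ i.val ≤ GridMajorAux.key p)).image lab,
    ⟨?_, ?_, ?_⟩, ?_⟩
  · -- coverage
    intro v
    obtain ⟨p, hp⟩ := hsurj v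
    refine ⟨⟨GridMajorAux.key p, GridMajorAux.key_lt p⟩, ?_⟩
    simp only [Finset.mem_image, Finset.mem_filter, Finset.mem_univ, true_and]
    exact ⟨p, ⟨Nat.le_add_right _ _, le_refl _⟩, hp⟩
  · -- interval property
    intro v i j k hij hjk hvi hvk
    by_contra hvj
    simp only [Finset.mem_image, Finset.mem_filter, Finset.mem_univ, true_and] at hvi hvk hvj
    obtain ⟨p, ⟨hp1, hp2⟩, hpl⟩ := hvi
    obtain ⟨q, ⟨hq1, hq2⟩, hql⟩ := hvk
    have hS : ∀ r ∈ {r : Fin W × Fin H | lab r = v},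
        ¬ (GridMajorAux.key r ≤ j.val + H ∧ j.val ≤ GridMajorAux.key r) := by
      intro r hr hcon
      exact hvj ⟨r, hcon, hr⟩
    have hpS : p ∈ {r : Fin W × Fin H | lab r = v} := hpl
    have hqS : q ∈ {r : Fin W × Fin H | lab r = v} := hql
    obtain ⟨w⟩ := (hconn v).preconnected ⟨p, hpS⟩ ⟨q, hqS⟩
    have hij' : i.val ≤ j.val := hij
    have hjk' : j.val ≤ k.val := hjk
    have hpj : GridMajorAux.key p < j.val := by
      by_contra hcon
      exact hS p hpS ⟨by omega, by omega⟩
    have hqj : GridMajorAux.key q < j.val := GridMajorAux.walk_key_lt hS w hpj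
    omega
  · -- edges
    intro v w hvw
    obtain ⟨p, q, hadj, hp, hq⟩ := hedge v w hvw
    have h1 : GridMajorAux.key q ≤ GridMajorAux.key p + H := GridMajorAux.key_adj hadj
    have h2 : GridMajorAux.key p ≤ GridMajorAux.key q + H := GridMajorAux.key_adj hadj.symm
    refine ⟨⟨min (GridMajorAux.key p) (GridMajorAux.key q),
      lt_of_le_of_lt (min_le_left _ _) (GridMajorAux.key_lt p)⟩, ?_, ?_⟩ <;>
      simp only [Finset.mem_image, Finset.mem_filter, Finset.mem_univ, true_and]
    · exact ⟨p, ⟨by omega, by omega⟩, hp⟩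
    · exact ⟨q, ⟨by omega, by omega⟩, hq⟩
  · -- bag size
    intro i
    refine le_trans (Finset.card_image_le) ?_
    have hsub : (Finset.univ.filter
        (fun p : Fin W × Fin H => GridMajorAux.key p ≤ i.val + H ∧ i.val ≤ GridMajorAux.key p)).card
        ≤ (Finset.Icc i.val (i.val + H)).card := by
      apply Finset.card_le_card_of_injOn GridMajorAux.key
      · intro p hp
        simp only [Finset.mem_coe, Finset.mem_filter, Finset.mem_univ, true_and] at hp
        simp only [Finset.mem_coe, Finset.mem_Icc]
        omega
      · exact Function.Injective.injOn GridMajorAux.key_injective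
    rw [Nat.card_Icc] at hsub
    omega
end

section
/- For every triangulated planar graph G, sGMh(G) ≤ VRh(G): every flat visibility representation of G of height h can be converted into a simple grid-major representation of G of height h. -/
open SimpleGraph

/-- A (combinatorially embedded, oriented) triangulated planar graph: a maximal planar
graph together with its set of triangular faces (including the outer face).  The field
`left` records the orientation of the embedding: `left x y` is the third vertex of the
face lying to the left of the directed edge `(x, y)`. -/
structure PlaneTriangulation (V : Type*) [Fintype V] [DecidableEq V] where
  graph : SimpleGraph V
  faces : Finset (Finset V)
  three_le_card : 3 ≤ Fintype.card V
  graph_connected : graph.Connected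
  face_card : ∀ f ∈ faces, f.card = 3
  face_clique : ∀ f ∈ faces, ∀ x ∈ f, ∀ y ∈ f, x ≠ y → graph.Adj x y
  edge_two_faces : ∀ x y : V, graph.Adj x y →
    (faces.filter fun f => x ∈ f ∧ y ∈ f).card = 2
  left : V → V → V
  left_mem_faces : ∀ x y : V, graph.Adj x y → ({x, y, left x y} : Finset V) ∈ faces
  left_ne : ∀ x y : V, graph.Adj x y → left x y ≠ left y x
  euler : faces.card + 4 = 2 * Fintype.card V

/-- The horizontal bar with `y`-coordinate `yb` and `x`-range `[xl, xr]`. -/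
def barSet (yb xl xr : ℤ) : Set (ℝ × ℝ) :=
  {p | p.2 = (yb : ℝ) ∧ (xl : ℝ) ≤ p.1 ∧ p.1 ≤ (xr : ℝ)}

/-- A flat visibility representation of `G` of height `h`: every vertex `v` is a
horizontal bar at integer `y`-coordinate `ybar v ∈ {1, …, h}` with `x`-range
`[xl v, xr v]`; bars are pairwise disjoint; every edge `(u,v)` has a horizontal or
vertical straight-line segment of visibility `vis u v` joining the two bars and meeting
no other bar; and the visibility segments of distinct edges do not cross. -/
def IsFlatVisibilityRep {V : Type*} (G : SimpleGraph V) (h : ℕ)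
    (ybar xl xr : V → ℤ) (vis : V → V → Set (ℝ × ℝ)) : Prop :=
  (∀ v : V, 1 ≤ ybar v ∧ ybar v ≤ (h : ℤ) ∧ xl v ≤ xr v) ∧
  (∀ u v : V, u ≠ v →
    Disjoint (barSet (ybar u) (xl u) (xr u)) (barSet (ybar v) (xl v) (xr v))) ∧
  (∀ u v : V, vis u v = vis v u) ∧
  (∀ u v : V, G.Adj u v →
    ∃ p q : ℝ × ℝ, vis u v = segment ℝ p q ∧ (p.1 = q.1 ∨ p.2 = q.2) ∧
      p ∈ barSet (ybar u) (xl u) (xr u) ∧ q ∈ barSet (ybar v) (xl v) (xr v) ∧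
      ∀ w : V, w ≠ u → w ≠ v → Disjoint (vis u v) (barSet (ybar w) (xl w) (xr w))) ∧
  (∀ u v x y : V, G.Adj u v → G.Adj x y → s(u, v) ≠ s(x, y) →
    Disjoint (vis u v) (vis x y))

namespace VRGM
variable {V : Type*}

def IsBar (ybar xl xr : V → ℤ) (v : V) (x : ℝ) (r : ℤ) : Prop :=
  r = ybar v ∧ (xl v : ℝ) ≤ x ∧ x ≤ (xr v : ℝ)

def IsChan (G : SimpleGraph V) (ybar : V → ℤ) (vis : V → V → Set (ℝ × ℝ))
    (u v : V) (x : ℝ) (r : ℤ) : Prop :=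
  G.Adj u v ∧ ybar u = r ∧ ybar v = r ∧ (x, (r : ℝ)) ∈ vis u v

noncomputable def midpt (xl xr : V → ℤ) (u v : V) : ℝ :=
  ((min (xr u) (xr v) + max (xl u) (xl v) : ℤ) : ℝ) / 2

noncomputable def chanLab (xl xr : V → ℤ) (u v : V) (x : ℝ) : V :=
  if x ≤ midpt xl xr u v then (if xr u < xr v then u else v)
  else (if xr u < xr v then v else u)

open Classical in
noncomputable def occLabel (G : SimpleGraph V) (ybar xl xr : V → ℤ)
    (vis : V → V → Set (ℝ × ℝ)) (v₀ : V) (x : ℝ) (r : ℤ) : V :=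
  if hb : ∃ v, IsBar ybar xl xr v x r then hb.choose
  else if hc : ∃ p : V × V, IsChan G ybar vis p.1 p.2 x r then
    chanLab xl xr hc.choose.1 hc.choose.2 x
  else v₀

def OccP (G : SimpleGraph V) (ybar xl xr : V → ℤ) (vis : V → V → Set (ℝ × ℝ))
    (x : ℝ) (r : ℤ) : Prop :=
  (∃ v, IsBar ybar xl xr v x r) ∨ ∃ p : V × V, IsChan G ybar vis p.1 p.2 x r

open Classical in
noncomputable def occSet (G : SimpleGraph V) (h : ℕ) (ybar xl xr : V → ℤ)
    (vis : V → V → Set (ℝ × ℝ)) (x : ℝ) : Finset ℤ :=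
  (Finset.Icc 1 (h : ℤ)).filter fun r => OccP G ybar xl xr vis x r

noncomputable def nearRow (G : SimpleGraph V) (h : ℕ) (ybar xl xr : V → ℤ)
    (vis : V → V → Set (ℝ × ℝ)) (x : ℝ) (r : ℤ) : ℤ :=
  if hb : ((occSet G h ybar xl xr vis x).filter (· ≤ r)).Nonempty then
    ((occSet G h ybar xl xr vis x).filter (· ≤ r)).max' hb
  else if hc : (occSet G h ybar xl xr vis x).Nonempty then
    (occSet G h ybar xl xr vis x).min' hc
  else r

noncomputable def labelAt (G : SimpleGraph V) (h : ℕ) (ybar xl xr : V → ℤ)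
    (vis : V → V → Set (ℝ × ℝ)) (v₀ : V) (x : ℝ) (r : ℤ) : V :=
  occLabel G ybar xl xr vis v₀ x (nearRow G h ybar xl xr vis x r)

def VcolSet (G : SimpleGraph V) (ybar xl xr : V → ℤ) (v : V) : Set ℝ :=
  Set.Icc ((xl v : ℝ)) ((xr v : ℝ)) ∪
  {x | ∃ w, G.Adj v w ∧ ybar w = ybar v ∧ xr v < xl w ∧ (xr v : ℝ) < x ∧ x ≤ midpt xl xr v w} ∪
  {x | ∃ w, G.Adj v w ∧ ybar w = ybar v ∧ xr w < xl v ∧ midpt xl xr v w < x ∧ x < (xl v : ℝ)}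

section Lemmas
variable {G : SimpleGraph V} {h : ℕ} {ybar xl xr : V → ℤ}
  {vis : V → V → Set (ℝ × ℝ)} {v₀ : V}

/-! segment helpers -/

lemma combo_between {a b c d : ℝ} (ha : 0 ≤ a) (hb : 0 ≤ b) (hab : a + b = 1) :
    min c d ≤ a * c + b * d ∧ a * c + b * d ≤ max c d := by
  have h1 := mul_le_mul_of_nonneg_left (min_le_left c d) ha
  have h2 := mul_le_mul_of_nonneg_left (min_le_right c d) hb
  have h3 := mul_le_mul_of_nonneg_left (le_max_left c d) ha
  have h4 := mul_le_mul_of_nonneg_left (le_max_right c d) hb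
  have h5 : a * min c d + b * min c d = min c d := by rw [← add_mul, hab, one_mul]
  have h6 : a * max c d + b * max c d = max c d := by rw [← add_mul, hab, one_mul]
  constructor <;> linarith

lemma seg_coords {p q z : ℝ × ℝ} (hz : z ∈ segment ℝ p q) :
    (min p.1 q.1 ≤ z.1 ∧ z.1 ≤ max p.1 q.1) ∧ (min p.2 q.2 ≤ z.2 ∧ z.2 ≤ max p.2 q.2) := by
  obtain ⟨a, b, ha, hb, hab, hz⟩ := hz
  have h1 : a * p.1 + b * q.1 = z.1 := by rw [← hz]; simp [smul_eq_mul]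
  have h2 : a * p.2 + b * q.2 = z.2 := by rw [← hz]; simp [smul_eq_mul]
  have c1 := combo_between (c := p.1) (d := q.1) ha hb hab
  have c2 := combo_between (c := p.2) (d := q.2) ha hb hab
  rw [h1] at c1
  rw [h2] at c2
  exact ⟨c1, c2⟩

lemma mem_seg_h {p q : ℝ × ℝ} (hpq : p.2 = q.2) {x : ℝ} (h1 : p.1 ≤ x) (h2 : x ≤ q.1) :
    ((x, p.2) : ℝ × ℝ) ∈ segment ℝ p q := by
  rcases eq_or_lt_of_le (h1.trans h2) with heq | hlt
  · have hx : x = p.1 := le_antisymm (heq ▸ h2) h1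
    have hq : ((x, p.2) : ℝ × ℝ) = p := by rw [hx]
    rw [hq]; exact left_mem_segment ℝ p q
  · have hd : q.1 - p.1 ≠ 0 := by linarith
    refine ⟨(q.1 - x) / (q.1 - p.1), (x - p.1) / (q.1 - p.1),
      div_nonneg (by linarith) (by linarith), div_nonneg (by linarith) (by linarith),
      by field_simp; ring, ?_⟩
    apply Prod.ext <;> simp only [Prod.fst_add, Prod.snd_add, Prod.smul_fst,
      Prod.smul_snd, smul_eq_mul] <;> field_simp <;> ring_nf
    · linear_combination (p.1 - x) * hpq

lemma mem_seg_v {p q : ℝ × ℝ} (hpq : p.1 = q.1) {y : ℝ} (h1 : p.2 ≤ y) (h2 : y ≤ q.2) :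
    ((p.1, y) : ℝ × ℝ) ∈ segment ℝ p q := by
  rcases eq_or_lt_of_le (h1.trans h2) with heq | hlt
  · have hy : y = p.2 := le_antisymm (heq ▸ h2) h1
    have hq : ((p.1, y) : ℝ × ℝ) = p := by rw [hy]
    rw [hq]; exact left_mem_segment ℝ p q
  · have hd : q.2 - p.2 ≠ 0 := by linarith
    refine ⟨(q.2 - y) / (q.2 - p.2), (y - p.2) / (q.2 - p.2),
      div_nonneg (by linarith) (by linarith), div_nonneg (by linarith) (by linarith),
      by field_simp; ring, ?_⟩
    apply Prod.ext <;> simp only [Prod.fst_add, Prod.snd_add, Prod.smul_fst,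
      Prod.smul_snd, smul_eq_mul] <;> field_simp <;> ring_nf
    · linear_combination (p.2 - y) * hpq

/-! bar facts -/

lemma isBar_mem {v : V} {x : ℝ} {r : ℤ} (hb : IsBar ybar xl xr v x r) :
    ((x, (r : ℝ)) : ℝ × ℝ) ∈ barSet (ybar v) (xl v) (xr v) :=
  ⟨by simp [hb.1], hb.2.1, hb.2.2⟩

lemma bar_unique
    (hd : ∀ u v : V, u ≠ v → Disjoint (barSet (ybar u) (xl u) (xr u)) (barSet (ybar v) (xl v) (xr v)))
    {u w : V} {x : ℝ} {r : ℤ} (hu : IsBar ybar xl xr u x r) (hw : IsBar ybar xl xr w x r) :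
    u = w := by
  by_contra hne
  exact Set.disjoint_left.mp (hd u w hne) (isBar_mem hu) (isBar_mem hw)

lemma chan_unique
    (hx : ∀ u v x y : V, G.Adj u v → G.Adj x y → s(u, v) ≠ s(x, y) → Disjoint (vis u v) (vis x y))
    {u v a b : V} {x : ℝ} {r : ℤ} (h1 : IsChan G ybar vis u v x r)
    (h2 : IsChan G ybar vis a b x r) :
    (a = u ∧ b = v) ∨ (a = v ∧ b = u) := by
  by_contra hne
  have hs : s(u, v) ≠ s(a, b) := by
    intro hEq
    rw [Sym2.eq_iff] at hEq
    tauto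
  exact Set.disjoint_left.mp (hx u v a b h1.1 h2.1 hs) h1.2.2.2 h2.2.2.2

lemma chan_ranges
    (hy : ∀ v : V, 1 ≤ ybar v ∧ ybar v ≤ (h : ℤ) ∧ xl v ≤ xr v)
    (hd : ∀ u v : V, u ≠ v → Disjoint (barSet (ybar u) (xl u) (xr u)) (barSet (ybar v) (xl v) (xr v)))
    {u v : V} (hne : u ≠ v) (hrow : ybar u = ybar v) : xr u < xl v ∨ xr v < xl u := by
  by_contra hcon
  push_neg at hcon
  set x' : ℝ := max ((xl u : ℝ)) ((xl v : ℝ)) with hx'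
  have h1 : ((x', (ybar u : ℝ)) : ℝ × ℝ) ∈ barSet (ybar u) (xl u) (xr u) := by
    refine ⟨rfl, le_max_left _ _, ?_⟩
    have e1 : (xl u : ℝ) ≤ (xr u : ℝ) := by exact_mod_cast (hy u).2.2
    have e2 : (xl v : ℝ) ≤ (xr u : ℝ) := by exact_mod_cast hcon.1
    simp [hx', e1, e2]
  have h2 : ((x', (ybar u : ℝ)) : ℝ × ℝ) ∈ barSet (ybar v) (xl v) (xr v) := by
    refine ⟨by simp [hrow], le_max_right _ _, ?_⟩
    have e1 : (xl v : ℝ) ≤ (xr v : ℝ) := by exact_mod_cast (hy v).2.2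
    have e2 : (xl u : ℝ) ≤ (xr v : ℝ) := by exact_mod_cast hcon.2
    simp [hx', e1, e2]
  exact Set.disjoint_left.mp (hd u v hne) h1 h2

lemma chan_xr_ne
    (hy : ∀ v : V, 1 ≤ ybar v ∧ ybar v ≤ (h : ℤ) ∧ xl v ≤ xr v)
    (hd : ∀ u v : V, u ≠ v → Disjoint (barSet (ybar u) (xl u) (xr u)) (barSet (ybar v) (xl v) (xr v)))
    {u v : V} (hne : u ≠ v) (hrow : ybar u = ybar v) : xr u ≠ xr v := by
  rcases chan_ranges (h := h) hy hd hne hrow with h1 | h1 <;>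
    have := (hy u).2.2 <;> have := (hy v).2.2 <;> omega

lemma chan_lr
    (hy : ∀ v : V, 1 ≤ ybar v ∧ ybar v ≤ (h : ℤ) ∧ xl v ≤ xr v)
    (hd : ∀ u v : V, u ≠ v → Disjoint (barSet (ybar u) (xl u) (xr u)) (barSet (ybar v) (xl v) (xr v)))
    {u v : V} (hne : u ≠ v) (hrow : ybar u = ybar v) (hlt : xr u < xr v) : xr u < xl v := by
  rcases chan_ranges (h := h) hy hd hne hrow with h1 | h1
  · exact h1
  · have := (hy u).2.2; omega

lemma midpt_comm (u v : V) : midpt xl xr u v = midpt xl xr v u := by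
  unfold midpt; rw [min_comm, max_comm]

lemma chanLab_swap {u v : V} (hne : xr u ≠ xr v) {x : ℝ} :
    chanLab xl xr u v x = chanLab xl xr v u x := by
  unfold chanLab
  rw [midpt_comm]
  rcases hne.lt_or_gt with h1 | h1 <;>
    simp [h1, not_lt_of_gt h1, asymm h1]

/-! occLabel facts -/

lemma occLabel_bar
    (hd : ∀ u v : V, u ≠ v → Disjoint (barSet (ybar u) (xl u) (xr u)) (barSet (ybar v) (xl v) (xr v)))
    {v : V} {x : ℝ} {r : ℤ} (hb : IsBar ybar xl xr v x r) :
    occLabel G ybar xl xr vis v₀ x r = v := by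
  unfold occLabel
  rw [dif_pos ⟨v, hb⟩]
  exact bar_unique hd (Exists.choose_spec (⟨v, hb⟩ : ∃ w, IsBar ybar xl xr w x r)) hb

lemma occLabel_chan
    (hy : ∀ v : V, 1 ≤ ybar v ∧ ybar v ≤ (h : ℤ) ∧ xl v ≤ xr v)
    (hd : ∀ u v : V, u ≠ v → Disjoint (barSet (ybar u) (xl u) (xr u)) (barSet (ybar v) (xl v) (xr v)))
    (hx : ∀ u v x y : V, G.Adj u v → G.Adj x y → s(u, v) ≠ s(x, y) → Disjoint (vis u v) (vis x y))
    {u v : V} {x : ℝ} {r : ℤ} (hnb : ¬ ∃ b, IsBar ybar xl xr b x r)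
    (hc : IsChan G ybar vis u v x r) :
    occLabel G ybar xl xr vis v₀ x r = chanLab xl xr u v x := by
  have hxrne : xr u ≠ xr v :=
    chan_xr_ne (h := h) hy hd hc.1.ne (hc.2.1.trans hc.2.2.1.symm)
  unfold occLabel
  rw [dif_neg hnb, dif_pos ⟨((u, v) : V × V), hc⟩]
  have hspec := Exists.choose_spec (⟨((u, v) : V × V), hc⟩ :
    ∃ p : V × V, IsChan G ybar vis p.1 p.2 x r)
  rcases chan_unique hx hc hspec with ⟨e1, e2⟩ | ⟨e1, e2⟩
  · rw [e1, e2]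
  · rw [e1, e2, chanLab_swap hxrne.symm]

lemma occLabel_row {x : ℝ} {r : ℤ} {v : V}
    (hocc : OccP G ybar xl xr vis x r)
    (hl : occLabel G ybar xl xr vis v₀ x r = v) : ybar v = r := by
  unfold occLabel at hl
  split_ifs at hl with hb hc
  · have hspec := hb.choose_spec
    rw [hl] at hspec
    exact hspec.1.symm
  · have hspec := hc.choose_spec
    unfold chanLab at hl
    split_ifs at hl <;> rw [← hl]
    · exact hspec.2.1
    · exact hspec.2.2.1
    · exact hspec.2.2.1
    · exact hspec.2.1
  · rcases hocc with hh | hh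
    · exact absurd hh hb
    · exact absurd hh hc

/-! nearRow and labelAt facts -/

lemma mem_occSet {x : ℝ} {r : ℤ} :
    r ∈ occSet G h ybar xl xr vis x ↔
      r ∈ Finset.Icc 1 (h : ℤ) ∧ OccP G ybar xl xr vis x r := by
  simp only [occSet, Finset.mem_filter]

lemma nearRow_eq_max {x : ℝ} {r : ℤ}
    (hb : ((occSet G h ybar xl xr vis x).filter (· ≤ r)).Nonempty) :
    nearRow G h ybar xl xr vis x r = ((occSet G h ybar xl xr vis x).filter (· ≤ r)).max' hb := by
  rw [nearRow, dif_pos hb]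

lemma nearRow_eq_min {x : ℝ} {r : ℤ}
    (hb : ¬ ((occSet G h ybar xl xr vis x).filter (· ≤ r)).Nonempty)
    (hS : (occSet G h ybar xl xr vis x).Nonempty) :
    nearRow G h ybar xl xr vis x r = (occSet G h ybar xl xr vis x).min' hS := by
  rw [nearRow, dif_neg hb, dif_pos hS]

lemma nearRow_eq_id {x : ℝ} {r : ℤ}
    (hS : ¬ (occSet G h ybar xl xr vis x).Nonempty) :
    nearRow G h ybar xl xr vis x r = r := by
  have hb : ¬ ((occSet G h ybar xl xr vis x).filter (· ≤ r)).Nonempty := by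
    intro ⟨t, ht⟩
    exact hS ⟨t, (Finset.mem_filter.mp ht).1⟩
  rw [nearRow, dif_neg hb, dif_neg hS]

lemma nearRow_self {x : ℝ} {r : ℤ} (hr : r ∈ occSet G h ybar xl xr vis x) :
    nearRow G h ybar xl xr vis x r = r := by
  have hmem : r ∈ (occSet G h ybar xl xr vis x).filter (· ≤ r) :=
    Finset.mem_filter.mpr ⟨hr, le_refl r⟩
  have hb : ((occSet G h ybar xl xr vis x).filter (· ≤ r)).Nonempty := ⟨r, hmem⟩
  rw [nearRow_eq_max hb]
  refine le_antisymm ?_ (Finset.le_max' _ r hmem)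
  exact (Finset.mem_filter.mp (Finset.max'_mem _ hb)).2

lemma nearRow_mem {x : ℝ} {r : ℤ} (hS : (occSet G h ybar xl xr vis x).Nonempty) :
    nearRow G h ybar xl xr vis x r ∈ occSet G h ybar xl xr vis x := by
  by_cases hb : ((occSet G h ybar xl xr vis x).filter (· ≤ r)).Nonempty
  · rw [nearRow_eq_max hb]
    exact (Finset.mem_filter.mp (Finset.max'_mem _ hb)).1
  · rw [nearRow_eq_min hb hS]
    exact Finset.min'_mem _ hS

lemma labelAt_occ {x : ℝ} {r : ℤ} (hr : r ∈ occSet G h ybar xl xr vis x) :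
    labelAt G h ybar xl xr vis v₀ x r = occLabel G ybar xl xr vis v₀ x r := by
  rw [labelAt, nearRow_self hr]

lemma labelAt_fill {x : ℝ} {s r : ℤ}
    (hs : s ∈ occSet G h ybar xl xr vis x) (hsr : s ≤ r)
    (hgap : ∀ t : ℤ, s < t → t ≤ r → ¬ OccP G ybar xl xr vis x t) :
    labelAt G h ybar xl xr vis v₀ x r = occLabel G ybar xl xr vis v₀ x s := by
  have hmem : s ∈ (occSet G h ybar xl xr vis x).filter (· ≤ r) :=
    Finset.mem_filter.mpr ⟨hs, hsr⟩
  have hb : ((occSet G h ybar xl xr vis x).filter (· ≤ r)).Nonempty := ⟨s, hmem⟩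
  rw [labelAt, nearRow_eq_max hb]
  congr 1
  have hmmem := Finset.max'_mem _ hb
  have hmS := (Finset.mem_filter.mp hmmem).1
  have hmr : _ ≤ r := (Finset.mem_filter.mp hmmem).2
  have hsm : s ≤ _ := Finset.le_max' _ s hmem
  rcases eq_or_lt_of_le hsm with he | hlt
  · exact he.symm
  · exact absurd ((mem_occSet.mp hmS).2) (hgap _ hlt hmr)

lemma label_convex {x : ℝ} {r₁ r₂ r₃ : ℤ} {v : V}
    (h12 : r₁ ≤ r₂) (h23 : r₂ ≤ r₃)
    (hm1 : r₁ ∈ Finset.Icc 1 (h : ℤ)) (hm2 : r₂ ∈ Finset.Icc 1 (h : ℤ))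
    (hl1 : labelAt G h ybar xl xr vis v₀ x r₁ = v)
    (hl3 : labelAt G h ybar xl xr vis v₀ x r₃ = v) :
    labelAt G h ybar xl xr vis v₀ x r₂ = v := by
  by_cases hS : (occSet G h ybar xl xr vis x).Nonempty
  · have hocc1 : nearRow G h ybar xl xr vis x r₁ ∈ occSet G h ybar xl xr vis x :=
      nearRow_mem hS
    have hocc3 : nearRow G h ybar xl xr vis x r₃ ∈ occSet G h ybar xl xr vis x :=
      nearRow_mem hS
    have hrow1 : ybar v = nearRow G h ybar xl xr vis x r₁ :=
      occLabel_row (mem_occSet.mp hocc1).2 hl1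
    have hrow3 : ybar v = nearRow G h ybar xl xr vis x r₃ :=
      occLabel_row (mem_occSet.mp hocc3).2 hl3
    have hmain : nearRow G h ybar xl xr vis x r₂ = nearRow G h ybar xl xr vis x r₁ := by
      by_cases hc2 : ((occSet G h ybar xl xr vis x).filter (· ≤ r₂)).Nonempty
      · have key : nearRow G h ybar xl xr vis x r₁ ≤ r₂ := by
          by_contra hgt
          push_neg at hgt
          have hf1 : ¬ ((occSet G h ybar xl xr vis x).filter (· ≤ r₁)).Nonempty := by
            intro hne1
            have he := nearRow_eq_max (G := G) (h := h) (ybar := ybar) (xl := xl)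
              (xr := xr) (vis := vis) hne1
            have hmem := Finset.max'_mem _ hne1
            rw [← he] at hmem
            have : nearRow G h ybar xl xr vis x r₁ ≤ r₁ := (Finset.mem_filter.mp hmem).2
            omega
          have hmin := nearRow_eq_min (G := G) (h := h) (ybar := ybar) (xl := xl)
            (xr := xr) (vis := vis) (r := r₁) hf1 hS
          obtain ⟨t, ht⟩ := hc2
          have htS := (Finset.mem_filter.mp ht).1
          have htr := (Finset.mem_filter.mp ht).2
          have := Finset.min'_le _ t htS
          omega
        have hmem2 : nearRow G h ybar xl xr vis x r₁ ∈
            (occSet G h ybar xl xr vis x).filter (· ≤ r₂) :=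
          Finset.mem_filter.mpr ⟨hocc1, key⟩
        have h2eq := nearRow_eq_max (G := G) (h := h) (ybar := ybar) (xl := xl)
          (xr := xr) (vis := vis) hc2
        have hm₂mem := Finset.max'_mem _ hc2
        have hm₂S := (Finset.mem_filter.mp hm₂mem).1
        have hm₂r := (Finset.mem_filter.mp hm₂mem).2
        have hs₁le := Finset.le_max' _ _ hmem2
        have hc3 : ((occSet G h ybar xl xr vis x).filter (· ≤ r₃)).Nonempty :=
          ⟨nearRow G h ybar xl xr vis x r₁, Finset.mem_filter.mpr ⟨hocc1, by omega⟩⟩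
        have h3eq := nearRow_eq_max (G := G) (h := h) (ybar := ybar) (xl := xl)
          (xr := xr) (vis := vis) hc3
        have hm₂le : ((occSet G h ybar xl xr vis x).filter (· ≤ r₂)).max' hc2 ≤
            nearRow G h ybar xl xr vis x r₃ := by
          rw [h3eq]
          exact Finset.le_max' _ _ (Finset.mem_filter.mpr ⟨hm₂S, by omega⟩)
        rw [h2eq]
        omega
      · have hf1 : ¬ ((occSet G h ybar xl xr vis x).filter (· ≤ r₁)).Nonempty := by
          intro ⟨t, ht⟩
          exact hc2 ⟨t, Finset.mem_filter.mpr
            ⟨(Finset.mem_filter.mp ht).1, le_trans (Finset.mem_filter.mp ht).2 h12⟩⟩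
        rw [nearRow_eq_min hc2 hS, nearRow_eq_min hf1 hS]
    rw [labelAt, hmain]
    exact hl1
  · have hnone : ∀ t : ℤ, t ∈ Finset.Icc 1 (h : ℤ) → ¬ OccP G ybar xl xr vis x t := by
      intro t ht hocc
      exact hS ⟨t, mem_occSet.mpr ⟨ht, hocc⟩⟩
    have hval : ∀ t : ℤ, t ∈ Finset.Icc 1 (h : ℤ) →
        labelAt G h ybar xl xr vis v₀ x t = v₀ := by
      intro t ht
      rw [labelAt, nearRow_eq_id hS, occLabel]
      rw [dif_neg, dif_neg]
      · intro ⟨p, hp⟩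
        exact hnone t ht (Or.inr ⟨p, hp⟩)
      · intro ⟨b, hb⟩
        exact hnone t ht (Or.inl ⟨b, hb⟩)
    rw [hval r₂ hm2, ← hval r₁ hm1, hl1]

/-! VcolSet facts -/

lemma midpt_bounds (hy : ∀ v : V, 1 ≤ ybar v ∧ ybar v ≤ (h : ℤ) ∧ xl v ≤ xr v)
    {u w : V} (hlr : xr u < xl w) :
    (xr u : ℝ) < midpt xl xr u w ∧ midpt xl xr u w < (xl w : ℝ) := by
  have h1 : min (xr u) (xr w) = xr u := min_eq_left (by have := (hy w).2.2; omega)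
  have h2 : max (xl u) (xl w) = xl w := max_eq_right (by have := (hy u).2.2; omega)
  have hcast : (xr u : ℝ) < (xl w : ℝ) := by exact_mod_cast hlr
  unfold midpt
  rw [h1, h2]
  push_cast
  constructor <;> linarith

lemma vcol_convex (hy : ∀ v : V, 1 ≤ ybar v ∧ ybar v ≤ (h : ℤ) ∧ xl v ≤ xr v)
    {v : V} {x₁ x₂ x₃ : ℝ} (h1 : x₁ ∈ VcolSet G ybar xl xr v)
    (h3 : x₃ ∈ VcolSet G ybar xl xr v) (h12 : x₁ ≤ x₂) (h23 : x₂ ≤ x₃) :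
    x₂ ∈ VcolSet G ybar xl xr v := by
  have hlr : (xl v : ℝ) ≤ (xr v : ℝ) := by exact_mod_cast (hy v).2.2
  by_cases hbase : (xl v : ℝ) ≤ x₂ ∧ x₂ ≤ (xr v : ℝ)
  · exact Or.inl (Or.inl ⟨hbase.1, hbase.2⟩)
  · push_neg at hbase
    by_cases hlow : x₂ < (xl v : ℝ)
    · -- x₁ must lie in a left piece
      rcases h1 with (hb | hr) | hl
      · exact absurd (le_trans hb.1 h12) (not_le.mpr hlow)
      · obtain ⟨w, hadj, hrow, hwlr, hgt, hle⟩ := hr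
        linarith
      · obtain ⟨w, hadj, hrow, hwlr, hgt, hlt⟩ := hl
        exact Or.inr ⟨w, hadj, hrow, hwlr, lt_of_lt_of_le hgt h12, hlow⟩
    · push_neg at hlow
      have hhigh : (xr v : ℝ) < x₂ := hbase hlow
      rcases h3 with (hb | hr) | hl
      · exact absurd (le_trans h23 hb.2) (not_le.mpr hhigh)
      · obtain ⟨w, hadj, hrow, hwlr, hgt, hle⟩ := hr
        exact Or.inl (Or.inr ⟨w, hadj, hrow, hwlr, hhigh, le_trans h23 hle⟩)
      · obtain ⟨w, hadj, hrow, hwlr, hgt, hlt⟩ := hl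
        linarith

lemma chan_seg
    (hvis : ∀ u v : V, G.Adj u v →
      ∃ p q : ℝ × ℝ, vis u v = segment ℝ p q ∧ (p.1 = q.1 ∨ p.2 = q.2) ∧
        p ∈ barSet (ybar u) (xl u) (xr u) ∧ q ∈ barSet (ybar v) (xl v) (xr v) ∧
        ∀ w : V, w ≠ u → w ≠ v → Disjoint (vis u v) (barSet (ybar w) (xl w) (xr w)))
    {v w : V} (hadj : G.Adj v w) (hrow : ybar w = ybar v) (hwlr : xr v < xl w)
    {x : ℝ} (hgt : (xr v : ℝ) < x) (hlt : x < (xl w : ℝ)) :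
    ((x, (ybar v : ℝ)) : ℝ × ℝ) ∈ vis v w ∧ ¬ ∃ b, IsBar ybar xl xr b x (ybar v) := by
  obtain ⟨p, q, hseg, hdir, hp, hq, hw⟩ := hvis v w hadj
  have hp2 : p.2 = (ybar v : ℝ) := hp.1
  have hq2 : q.2 = (ybar v : ℝ) := by rw [hq.1]; exact_mod_cast congrArg (Int.cast : ℤ → ℝ) hrow
  have hpq : p.2 = q.2 := by rw [hp2, hq2]
  have hmem : ((x, (ybar v : ℝ)) : ℝ × ℝ) ∈ vis v w := by
    rw [hseg, ← hp2]
    exact mem_seg_h hpq (le_trans hp.2.2 (le_of_lt hgt)) (le_trans (le_of_lt hlt) hq.2.1)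
  refine ⟨hmem, ?_⟩
  rintro ⟨b, hb⟩
  by_cases hbv : b = v
  · subst hbv
    exact absurd hb.2.2 (not_le.mpr hgt)
  by_cases hbw : b = w
  · subst hbw
    exact absurd hb.2.1 (not_le.mpr hlt)
  · exact Set.disjoint_left.mp (hw b hbv hbw) hmem (isBar_mem hb)

lemma vcol_label (hy : ∀ v : V, 1 ≤ ybar v ∧ ybar v ≤ (h : ℤ) ∧ xl v ≤ xr v)
    (hd : ∀ u v : V, u ≠ v → Disjoint (barSet (ybar u) (xl u) (xr u)) (barSet (ybar v) (xl v) (xr v)))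
    (hvis : ∀ u v : V, G.Adj u v →
      ∃ p q : ℝ × ℝ, vis u v = segment ℝ p q ∧ (p.1 = q.1 ∨ p.2 = q.2) ∧
        p ∈ barSet (ybar u) (xl u) (xr u) ∧ q ∈ barSet (ybar v) (xl v) (xr v) ∧
        ∀ w : V, w ≠ u → w ≠ v → Disjoint (vis u v) (barSet (ybar w) (xl w) (xr w)))
    (hx : ∀ u v x y : V, G.Adj u v → G.Adj x y → s(u, v) ≠ s(x, y) → Disjoint (vis u v) (vis x y))
    {v : V} {x : ℝ} (hmem : x ∈ VcolSet G ybar xl xr v) :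
    OccP G ybar xl xr vis x (ybar v) ∧ occLabel G ybar xl xr vis v₀ x (ybar v) = v := by
  rcases hmem with (hb | hr) | hl
  · have hbar : IsBar ybar xl xr v x (ybar v) := ⟨rfl, hb.1, hb.2⟩
    exact ⟨Or.inl ⟨v, hbar⟩, occLabel_bar hd hbar⟩
  · obtain ⟨w, hadj, hrow, hwlr, hgt, hle⟩ := hr
    have hmb := midpt_bounds (h := h) (ybar := ybar) hy hwlr
    obtain ⟨hin, hnb⟩ := chan_seg hvis hadj hrow hwlr hgt (lt_of_le_of_lt hle hmb.2)
    have hch : IsChan G ybar vis v w x (ybar v) := ⟨hadj, rfl, hrow, hin⟩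
    refine ⟨Or.inr ⟨(v, w), hch⟩, ?_⟩
    rw [occLabel_chan (h := h) hy hd hx hnb hch]
    unfold chanLab
    rw [if_pos hle, if_pos (by have := (hy w).2.2; omega)]
  · obtain ⟨w, hadj, hrow, hwlr, hgt, hlt⟩ := hl
    have hmb := midpt_bounds (h := h) (ybar := ybar) hy hwlr
    have hrow' : ybar v = ybar w := hrow.symm
    have hgtc : midpt xl xr w v < x := by rw [midpt_comm]; exact hgt
    have hgt' : (xr w : ℝ) < x := lt_trans hmb.1 hgtc
    obtain ⟨hin, hnb'⟩ := chan_seg hvis hadj.symm hrow' hwlr hgt' hlt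
    -- hin : (x, ybar w) ∈ vis w v ... careful with rows
    have hrowc : (ybar w : ℝ) = (ybar v : ℝ) := by exact_mod_cast congrArg (Int.cast : ℤ → ℝ) hrow
    have hin' : ((x, (ybar v : ℝ)) : ℝ × ℝ) ∈ vis w v := by rw [← hrowc]; exact hin
    have hch : IsChan G ybar vis w v x (ybar v) := ⟨hadj.symm, hrow, rfl, hin'⟩
    have hnb : ¬ ∃ b, IsBar ybar xl xr b x (ybar v) := by
      intro ⟨b, hb⟩
      exact hnb' ⟨b, by rwa [← hrow] at hb⟩
    refine ⟨Or.inr ⟨(w, v), hch⟩, ?_⟩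
    rw [occLabel_chan (h := h) hy hd hx hnb hch]
    unfold chanLab
    rw [if_neg (not_le.mpr hgtc), if_pos (by have := (hy v).2.2; omega)]

lemma vcol_of_label (hy : ∀ v : V, 1 ≤ ybar v ∧ ybar v ≤ (h : ℤ) ∧ xl v ≤ xr v)
    (hd : ∀ u v : V, u ≠ v → Disjoint (barSet (ybar u) (xl u) (xr u)) (barSet (ybar v) (xl v) (xr v)))
    (hvis : ∀ u v : V, G.Adj u v →
      ∃ p q : ℝ × ℝ, vis u v = segment ℝ p q ∧ (p.1 = q.1 ∨ p.2 = q.2) ∧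
        p ∈ barSet (ybar u) (xl u) (xr u) ∧ q ∈ barSet (ybar v) (xl v) (xr v) ∧
        ∀ w : V, w ≠ u → w ≠ v → Disjoint (vis u v) (barSet (ybar w) (xl w) (xr w)))
    {v : V} {x : ℝ} (hocc : OccP G ybar xl xr vis x (ybar v))
    (hl : occLabel G ybar xl xr vis v₀ x (ybar v) = v) :
    x ∈ VcolSet G ybar xl xr v := by
  unfold occLabel at hl
  split_ifs at hl with hb hc
  · have hspec := hb.choose_spec
    rw [hl] at hspec
    exact Or.inl (Or.inl ⟨hspec.2.1, hspec.2.2⟩)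
  · have hpack : ∃ ab : V × V, IsChan G ybar vis ab.1 ab.2 x (ybar v) ∧
        chanLab xl xr ab.1 ab.2 x = v := ⟨hc.choose, hc.choose_spec, hl⟩
    obtain ⟨⟨a, b⟩, hchan, hlab⟩ := hpack
    dsimp only at hchan hlab
    obtain ⟨hadj, hrowa, hrowb, hvisab⟩ := hchan
    have hne : a ≠ b := hadj.ne
    have hrowab : ybar a = ybar b := by omega
    have hranges := chan_ranges (h := h) hy hd hne hrowab
    have hxrne : xr a ≠ xr b := chan_xr_ne (h := h) hy hd hne hrowab
    obtain ⟨p, q, hseg, hdir, hp, hq, hw⟩ := hvis a b hadj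
    rw [hseg] at hvisab
    have hcoords := (seg_coords hvisab).1
    have hxlo : min ((xl a : ℝ)) ((xl b : ℝ)) ≤ x :=
      le_trans (min_le_min hp.2.1 hq.2.1) hcoords.1
    have hxhi : x ≤ max ((xr a : ℝ)) ((xr b : ℝ)) :=
      le_trans hcoords.2 (max_le_max hp.2.2 hq.2.2)
    have hlra : xl a ≤ xr a := (hy a).2.2
    have hlrb : xl b ≤ xr b := (hy b).2.2
    have hca : ((xl a : ℝ) ≤ (xr a : ℝ)) := by exact_mod_cast hlra
    have hcb : ((xl b : ℝ) ≤ (xr b : ℝ)) := by exact_mod_cast hlrb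
    unfold chanLab at hlab
    split_ifs at hlab with hmid hab hab
    · -- x ≤ mid, xr a < xr b : v = a (left bar)
      subst hlab
      have hab' : xr a < xl b := by rcases hranges with hh | hh; exacts [hh, by omega]
      have hclb : ((xr a : ℝ) < (xl b : ℝ)) := by exact_mod_cast hab'
      have hxlv : (xl a : ℝ) ≤ x :=
        le_trans (le_min (le_refl _) (by linarith)) hxlo
      by_cases hxr : x ≤ (xr a : ℝ)
      · exact Or.inl (Or.inl ⟨hxlv, hxr⟩)
      · push_neg at hxr
        exact Or.inl (Or.inr ⟨b, hadj, hrowb, hab', hxr, hmid⟩)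
    · -- x ≤ mid, xr b < xr a : v = b (left bar)
      subst hlab
      have hba : xr b < xl a := by rcases hranges with hh | hh; exacts [by omega, hh]
      have hcla : ((xr b : ℝ) < (xl a : ℝ)) := by exact_mod_cast hba
      have hxlv : (xl b : ℝ) ≤ x := by
        have hme : min ((xl a : ℝ)) ((xl b : ℝ)) = (xl b : ℝ) := min_eq_right (by linarith)
        linarith [hxlo, hme.ge.trans hxlo]
      have hmid' : x ≤ midpt xl xr b a := by rwa [midpt_comm]
      by_cases hxr : x ≤ (xr b : ℝ)
      · exact Or.inl (Or.inl ⟨hxlv, hxr⟩)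
      · push_neg at hxr
        exact Or.inl (Or.inr ⟨a, hadj.symm, hrowa, hba, hxr, hmid'⟩)
    · -- mid < x, xr a < xr b : v = b (right bar)
      subst hlab
      push_neg at hmid
      have hab' : xr a < xl b := by rcases hranges with hh | hh; exacts [hh, by omega]
      have hclb : ((xr a : ℝ) < (xl b : ℝ)) := by exact_mod_cast hab'
      have hxrv : x ≤ (xr b : ℝ) :=
        le_trans hxhi (max_le (by linarith) (le_refl _))
      have hmid' : midpt xl xr b a < x := by rwa [midpt_comm]
      by_cases hxl : (xl b : ℝ) ≤ x
      · exact Or.inl (Or.inl ⟨hxl, hxrv⟩)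
      · push_neg at hxl
        exact Or.inr ⟨a, hadj.symm, hrowa, hab', hmid', hxl⟩
    · -- mid < x, xr b < xr a : v = a (right bar)
      subst hlab
      push_neg at hmid
      have hba : xr b < xl a := by rcases hranges with hh | hh; exacts [by omega, hh]
      have hcla : ((xr b : ℝ) < (xl a : ℝ)) := by exact_mod_cast hba
      have hxrv : x ≤ (xr a : ℝ) :=
        le_trans hxhi (max_le (le_refl _) (by linarith))
      by_cases hxl : (xl a : ℝ) ≤ x
      · exact Or.inl (Or.inl ⟨hxl, hxrv⟩)
      · push_neg at hxl
        exact Or.inr ⟨b, hadj, hrowb, hba, hmid, hxl⟩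
  · rcases hocc with hh | hh
    · exact absurd hh hb
    · exact absurd hh hc

end Lemmas
end VRGM

/-- `sGMh(G) ≤ VRh(G)`: every flat visibility representation of a
triangulated planar graph of height `h` can be converted into a simple grid-major
representation of height `h`. -/
theorem simpleGridMajor_of_flatVisibility
    {V : Type*} [Fintype V] [DecidableEq V] (T : PlaneTriangulation V)
    (h : ℕ) (ybar xl xr : V → ℤ) (vis : V → V → Set (ℝ × ℝ))
    (hrep : IsFlatVisibilityRep T.graph h ybar xl xr vis) :
    ∃ (W : ℕ) (lab : Fin W × Fin h → V), IsSimpleGridMajorRep T.graph W h lab := by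
  classical
  obtain ⟨hy, hd, hsymm, hvis, hx⟩ := hrep
  have hVne : Nonempty V := Fintype.card_pos_iff.mp (by have := T.three_le_card; omega)
  obtain ⟨v₀⟩ := hVne
  have hh1 : 1 ≤ (h : ℤ) := le_trans (hy v₀).1 (hy v₀).2.1
  have hh : 1 ≤ h := by exact_mod_cast hh1
  have hvis' : ∀ u v : V, ∃ pq : (ℝ × ℝ) × (ℝ × ℝ), T.graph.Adj u v →
      vis u v = segment ℝ pq.1 pq.2 ∧ (pq.1.1 = pq.2.1 ∨ pq.1.2 = pq.2.2) ∧
      pq.1 ∈ barSet (ybar u) (xl u) (xr u) ∧ pq.2 ∈ barSet (ybar v) (xl v) (xr v) ∧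
      ∀ w : V, w ≠ u → w ≠ v → Disjoint (vis u v) (barSet (ybar w) (xl w) (xr w)) := by
    intro u v
    by_cases had : T.graph.Adj u v
    · obtain ⟨p, q, h1, h2, h3, h4, h5⟩ := hvis u v had
      exact ⟨(p, q), fun _ => ⟨h1, h2, h3, h4, h5⟩⟩
    · exact ⟨((0, 0), (0, 0)), fun had' => absurd had' had⟩
  choose P hP using hvis'
  set chosenX : Finset ℝ :=
    ((Finset.univ.image fun v : V => ((xl v : ℝ))) ∪
     (Finset.univ.image fun v : V => ((xr v : ℝ))) ∪
     (Finset.univ.image fun uv : V × V => (P uv.1 uv.2).1.1) ∪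
     (Finset.univ.image fun uv : V × V => VRGM.midpt xl xr uv.1 uv.2)).filter
      (fun x => (VRGM.occSet T.graph h ybar xl xr vis x).Nonempty) with hchX
  have hchXmem : ∀ x : ℝ, ((∃ v : V, ((xl v : ℝ)) = x) ∨ (∃ v : V, ((xr v : ℝ)) = x) ∨
      (∃ uv : V × V, (P uv.1 uv.2).1.1 = x) ∨ (∃ uv : V × V, VRGM.midpt xl xr uv.1 uv.2 = x)) →
      (VRGM.occSet T.graph h ybar xl xr vis x).Nonempty → x ∈ chosenX := by
    intro x hor hne
    rw [hchX, Finset.mem_filter]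
    refine ⟨?_, hne⟩
    simp only [Finset.mem_union, Finset.mem_image, Finset.mem_univ, true_and]
    tauto
  have hchXocc : ∀ x ∈ chosenX, (VRGM.occSet T.graph h ybar xl xr vis x).Nonempty := by
    intro x hxm
    rw [hchX, Finset.mem_filter] at hxm
    exact hxm.2
  set xc : Fin chosenX.card → ℝ :=
    fun c => ((chosenX.orderIsoOfFin rfl c : ℝ)) with hxcdef
  have hxc_mem : ∀ c, xc c ∈ chosenX := fun c => (chosenX.orderIsoOfFin rfl c).2
  have hxc_lt : ∀ {c c' : Fin chosenX.card}, c < c' → xc c < xc c' := by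
    intro c c' hcc
    exact Subtype.coe_lt_coe.mpr ((chosenX.orderIsoOfFin rfl).strictMono hcc)
  have hxc_le : ∀ {c c' : Fin chosenX.card}, c ≤ c' → xc c ≤ xc c' := by
    intro c c' hcc
    rcases eq_or_lt_of_le hcc with he | hlt
    · rw [he]
    · exact le_of_lt (hxc_lt hlt)
  have hxc_reflect : ∀ {c c' : Fin chosenX.card}, xc c < xc c' → c < c' := by
    intro c c' hcc
    by_contra hcon
    push_neg at hcon
    exact absurd (hxc_le hcon) (not_le.mpr hcc)
  have hxc_surj : ∀ x ∈ chosenX, ∃ c, xc c = x := by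
    intro x hxm
    refine ⟨(chosenX.orderIsoOfFin rfl).symm ⟨x, hxm⟩, ?_⟩
    rw [hxcdef]
    simp
  have hOccCol : ∀ c : Fin chosenX.card,
      (VRGM.occSet T.graph h ybar xl xr vis (xc c)).Nonempty :=
    fun c => hchXocc _ (hxc_mem c)
  have hbar_anchor : ∀ v : V, VRGM.IsBar ybar xl xr v ((xl v : ℝ)) (ybar v) :=
    fun v => ⟨rfl, le_refl _, by exact_mod_cast (hy v).2.2⟩
  have hanchor_occ : ∀ v : V,
      (ybar v) ∈ VRGM.occSet T.graph h ybar xl xr vis ((xl v : ℝ)) := by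
    intro v
    refine VRGM.mem_occSet.mpr ⟨?_, Or.inl ⟨v, hbar_anchor v⟩⟩
    rw [Finset.mem_Icc]
    exact ⟨(hy v).1, (hy v).2.1⟩
  have hxlv_mem : ∀ v : V, ((xl v : ℝ)) ∈ chosenX :=
    fun v => hchXmem _ (Or.inl ⟨v, rfl⟩) ⟨ybar v, hanchor_occ v⟩
  have hrow_lt : ∀ v : V, (ybar v - 1).toNat < h := by
    intro v
    have := (hy v).1
    have := (hy v).2.1
    omega
  set rU : V → Fin h := fun v => ⟨(ybar v - 1).toNat, hrow_lt v⟩ with hrUdef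
  have hrUI : ∀ v : V, (((rU v).val : ℤ)) + 1 = ybar v := by
    intro v
    rw [hrUdef]
    have := (hy v).1
    simp
    omega
  set lab : Fin chosenX.card × Fin h → V :=
    fun p => VRGM.labelAt T.graph h ybar xl xr vis v₀ (xc p.1) (((p.2.val : ℤ)) + 1)
    with hlabdef
  have hIcc : ∀ r : Fin h, (((r.val : ℤ)) + 1) ∈ Finset.Icc 1 (h : ℤ) := by
    intro r
    rw [Finset.mem_Icc]
    have := r.2
    omega
  -- anchor-row facts from any labelled cell
  have hocc_anchor : ∀ (c : Fin chosenX.card) (r : Fin h) (v : V),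
      lab (c, r) = v →
      (ybar v) ∈ VRGM.occSet T.graph h ybar xl xr vis (xc c) ∧
      VRGM.occLabel T.graph ybar xl xr vis v₀ (xc c) (ybar v) = v := by
    intro c r v hl
    have hS := hOccCol c
    have hmem := VRGM.nearRow_mem (r := ((r.val : ℤ)) + 1) hS
    rw [hlabdef] at hl
    dsimp only at hl
    rw [VRGM.labelAt] at hl
    have hrow := VRGM.occLabel_row (VRGM.mem_occSet.mp hmem).2 hl
    rw [← hrow] at hmem hl
    exact ⟨hmem, hl⟩
  have hlab_anchor : ∀ (c : Fin chosenX.card) (r : Fin h) (v : V),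
      lab (c, r) = v → lab (c, rU v) = v := by
    intro c r v hl
    obtain ⟨hm, hol⟩ := hocc_anchor c r v hl
    rw [hlabdef]
    dsimp only
    rw [hrUI v, VRGM.labelAt_occ hm]
    exact hol
  have hvcol_of_lab : ∀ (c : Fin chosenX.card) (r : Fin h) (v : V),
      lab (c, r) = v → xc c ∈ VRGM.VcolSet T.graph ybar xl xr v := by
    intro c r v hl
    obtain ⟨hm, hol⟩ := hocc_anchor c r v hl
    exact VRGM.vcol_of_label (h := h) hy hd hvis (VRGM.mem_occSet.mp hm).2 hol
  have hlab_of_vcol : ∀ (c : Fin chosenX.card) (v : V),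
      xc c ∈ VRGM.VcolSet T.graph ybar xl xr v → lab (c, rU v) = v := by
    intro c v hv
    obtain ⟨hocc, hol⟩ := VRGM.vcol_label (h := h) (v₀ := v₀) hy hd hvis hx hv
    have hm : (ybar v) ∈ VRGM.occSet T.graph h ybar xl xr vis (xc c) :=
      VRGM.mem_occSet.mpr ⟨by rw [Finset.mem_Icc]; exact ⟨(hy v).1, (hy v).2.1⟩, hocc⟩
    rw [hlabdef]
    dsimp only
    rw [hrUI v, VRGM.labelAt_occ hm]
    exact hol
  have hbetween : ∀ (c : Fin chosenX.card) (a b t : Fin h) (v : V), a ≤ t → t ≤ b →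
      lab (c, a) = v → lab (c, b) = v → lab (c, t) = v := by
    intro c a b t v h1 h2 hla hlb
    rw [hlabdef] at hla hlb ⊢
    dsimp only at hla hlb ⊢
    exact VRGM.label_convex (by have := Fin.le_def.mp h1; omega)
      (by have := Fin.le_def.mp h2; omega) (hIcc a) (hIcc t) hla hlb
  refine ⟨chosenX.card, lab, ⟨?_, ?_, ?_, ?_⟩, ?_⟩
  · -- W ≥ 1
    exact Finset.card_pos.mpr ⟨_, hxlv_mem v₀⟩
  · -- surjectivity
    intro v
    obtain ⟨c, hc⟩ := hxc_surj _ (hxlv_mem v)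
    refine ⟨(c, rU v), ?_⟩
    rw [hlabdef]
    dsimp only
    rw [hrUI v, hc, VRGM.labelAt_occ (hanchor_occ v)]
    exact VRGM.occLabel_bar hd (hbar_anchor v)
  · -- connectivity
    intro v
    rw [SimpleGraph.connected_iff]
    obtain ⟨c₀, hc₀⟩ := hxc_surj _ (hxlv_mem v)
    have hanchorlab : lab (c₀, rU v) = v := by
      rw [hlabdef]
      dsimp only
      rw [hrUI v, hc₀, VRGM.labelAt_occ (hanchor_occ v)]
      exact VRGM.occLabel_bar hd (hbar_anchor v)
    have hvert : ∀ (c : Fin chosenX.card) (n : ℕ) (a b : Fin h), b.val = a.val + n →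
        (∀ t : Fin h, a ≤ t → t ≤ b → lab (c, t) = v) →
        ∀ (ha : (c, a) ∈ {p : Fin chosenX.card × Fin h | lab p = v})
          (hb : (c, b) ∈ {p : Fin chosenX.card × Fin h | lab p = v}),
        ((gridGraph chosenX.card h).induce {p | lab p = v}).Reachable ⟨(c, a), ha⟩ ⟨(c, b), hb⟩ := by
      intro c n
      induction n with
      | zero =>
        intro a b hab hall ha hb
        have hab' : a = b := Fin.ext (by omega)
        subst hab'
        rfl
      | succ n ih =>
        intro a b hab hall ha hb
        have hblt : a.val + n < h := by have := b.2; omega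
        have h1 : a ≤ (⟨a.val + n, hblt⟩ : Fin h) := by
          rw [Fin.le_def]; exact Nat.le_add_right _ _
        have h2 : (⟨a.val + n, hblt⟩ : Fin h) ≤ b := by
          rw [Fin.le_def]; show a.val + n ≤ b.val; omega
        have hb'lab : lab (c, ⟨a.val + n, hblt⟩) = v := hall _ h1 h2
        have hreach := ih a ⟨a.val + n, hblt⟩ rfl
          (fun t ht1 ht2 => hall t ht1 (ht2.trans h2)) ha hb'lab
        refine hreach.trans (SimpleGraph.Adj.reachable ?_)
        exact Or.inl ⟨rfl, Or.inl (by show a.val + n + 1 = b.val; omega)⟩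
    have hhoriz : ∀ (n : ℕ) (c c' : Fin chosenX.card), c'.val = c.val + n →
        xc c ∈ VRGM.VcolSet T.graph ybar xl xr v →
        xc c' ∈ VRGM.VcolSet T.graph ybar xl xr v →
        ∀ (ha : (c, rU v) ∈ {p : Fin chosenX.card × Fin h | lab p = v})
          (hb : (c', rU v) ∈ {p : Fin chosenX.card × Fin h | lab p = v}),
        ((gridGraph chosenX.card h).induce {p | lab p = v}).Reachable
          ⟨(c, rU v), ha⟩ ⟨(c', rU v), hb⟩ := by
      intro n
      induction n with
      | zero =>
        intro c c' hcc hv hv' ha hb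
        have hcc' : c = c' := Fin.ext (by omega)
        subst hcc'
        rfl
      | succ n ih =>
        intro c c' hcc hv hv' ha hb
        have hclt : c.val + n < chosenX.card := by have := c'.2; omega
        have h1 : c ≤ (⟨c.val + n, hclt⟩ : Fin chosenX.card) := by
          rw [Fin.le_def]; exact Nat.le_add_right _ _
        have h2 : (⟨c.val + n, hclt⟩ : Fin chosenX.card) ≤ c' := by
          rw [Fin.le_def]; show c.val + n ≤ c'.val; omega
        have hvm : xc ⟨c.val + n, hclt⟩ ∈ VRGM.VcolSet T.graph ybar xl xr v :=
          VRGM.vcol_convex (h := h) hy hv hv' (hxc_le h1) (hxc_le h2)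
        have hlabm : lab (⟨c.val + n, hclt⟩, rU v) = v := hlab_of_vcol _ v hvm
        have hreach := ih c ⟨c.val + n, hclt⟩ rfl hv hvm ha hlabm
        refine hreach.trans (SimpleGraph.Adj.reachable ?_)
        exact Or.inr ⟨rfl, Or.inl (by show c.val + n + 1 = c'.val; omega)⟩
    have step1 : ∀ (c : Fin chosenX.card) (r : Fin h)
        (hp : (c, r) ∈ {p : Fin chosenX.card × Fin h | lab p = v}),
        ((gridGraph chosenX.card h).induce {p | lab p = v}).Reachable
          ⟨(c, r), hp⟩ ⟨(c, rU v), hlab_anchor c r v hp⟩ := by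
      intro c r hp
      have hAr : lab (c, rU v) = v := hlab_anchor c r v hp
      rcases le_total r (rU v) with hle | hle
      · exact hvert c ((rU v).val - r.val) r (rU v)
          (by have := Fin.le_def.mp hle; omega)
          (fun t ht1 ht2 => hbetween c r (rU v) t v ht1 ht2 hp hAr) hp hAr
      · exact (hvert c (r.val - (rU v).val) (rU v) r
          (by have := Fin.le_def.mp hle; omega)
          (fun t ht1 ht2 => hbetween c (rU v) r t v ht1 ht2 hAr hp) hAr hp).symm
    refine ⟨?_, ⟨⟨(c₀, rU v), hanchorlab⟩⟩⟩
    rintro ⟨⟨ca, ra⟩, hpa⟩ ⟨⟨cb, rb⟩, hpb⟩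
    have h1 := step1 ca ra hpa
    have h2 := step1 cb rb hpb
    have hva := hvcol_of_lab ca ra v hpa
    have hvb := hvcol_of_lab cb rb v hpb
    have hmid : ((gridGraph chosenX.card h).induce {p | lab p = v}).Reachable
        ⟨(ca, rU v), hlab_anchor ca ra v hpa⟩ ⟨(cb, rU v), hlab_anchor cb rb v hpb⟩ := by
      rcases le_total ca cb with hle | hle
      · exact hhoriz (cb.val - ca.val) ca cb (by have := Fin.le_def.mp hle; omega)
          hva hvb _ _
      · exact (hhoriz (ca.val - cb.val) cb ca (by have := Fin.le_def.mp hle; omega)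
          hvb hva _ _).symm
    exact (h1.trans hmid).trans h2.symm
  · -- edges
    have claimV : ∀ u v : V, T.graph.Adj u v → ybar u < ybar v →
        ∃ pc qc : Fin chosenX.card × Fin h,
          (gridGraph chosenX.card h).Adj pc qc ∧ lab pc = u ∧ lab qc = v := by
      intro u v hadj hltuv
      obtain ⟨hseg, hdir, hpmem, hqmem, hw⟩ := hP u v hadj
      set p := (P u v).1 with hpdef
      set q := (P u v).2 with hqdef
      have hp2 : p.2 = (ybar u : ℝ) := hpmem.1
      have hq2 : q.2 = (ybar v : ℝ) := hqmem.1
      have hx0 : p.1 = q.1 := by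
        rcases hdir with hd1 | hd2
        · exact hd1
        · exfalso
          rw [hp2, hq2] at hd2
          have : ybar u = ybar v := by exact_mod_cast hd2
          omega
      have hbu : VRGM.IsBar ybar xl xr u p.1 (ybar u) := ⟨rfl, hpmem.2.1, hpmem.2.2⟩
      have hbv : VRGM.IsBar ybar xl xr v p.1 (ybar v) :=
        ⟨rfl, by rw [hx0]; exact hqmem.2.1, by rw [hx0]; exact hqmem.2.2⟩
      have hoccu : (ybar u) ∈ VRGM.occSet T.graph h ybar xl xr vis p.1 :=
        VRGM.mem_occSet.mpr ⟨by rw [Finset.mem_Icc]; exact ⟨(hy u).1, (hy u).2.1⟩,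
          Or.inl ⟨u, hbu⟩⟩
      have hoccv : (ybar v) ∈ VRGM.occSet T.graph h ybar xl xr vis p.1 :=
        VRGM.mem_occSet.mpr ⟨by rw [Finset.mem_Icc]; exact ⟨(hy v).1, (hy v).2.1⟩,
          Or.inl ⟨v, hbv⟩⟩
      have hpm : p.1 ∈ chosenX :=
        hchXmem _ (Or.inr (Or.inr (Or.inl ⟨(u, v), rfl⟩))) ⟨ybar u, hoccu⟩
      obtain ⟨c, hc⟩ := hxc_surj _ hpm
      have hgap : ∀ t : ℤ, ybar u < t → t < ybar v →
          ¬ VRGM.OccP T.graph ybar xl xr vis p.1 t := by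
        intro t ht1 ht2 hocc
        have hta : p.2 ≤ ((t : ℝ)) := by
          rw [hp2]; exact_mod_cast le_of_lt ht1
        have htb : ((t : ℝ)) ≤ q.2 := by
          rw [hq2]; exact_mod_cast le_of_lt ht2
        have hpt : ((p.1, (t : ℝ)) : ℝ × ℝ) ∈ vis u v := by
          rw [hseg]; exact VRGM.mem_seg_v hx0 hta htb
        rcases hocc with ⟨b, hbb⟩ | ⟨⟨a, b⟩, hchan⟩
        · have hbu' : b ≠ u := by intro he; subst he; have := hbb.1; omega
          have hbv' : b ≠ v := by intro he; subst he; have := hbb.1; omega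
          exact Set.disjoint_left.mp (hw b hbu' hbv') hpt (VRGM.isBar_mem hbb)
        · dsimp only at hchan
          by_cases hsym : s(a, b) = s(u, v)
          · rw [Sym2.eq_iff] at hsym
            have ha1 := hchan.2.1
            have hb1 := hchan.2.2.1
            rcases hsym with ⟨e1, e2⟩ | ⟨e1, e2⟩ <;> subst e1 <;> subst e2 <;> omega
          · exact Set.disjoint_left.mp (hx a b u v hchan.1 hadj hsym) hchan.2.2.2 hpt
      have h2v : 2 ≤ ybar v := by have := (hy u).1; omega
      have hvth : ybar v ≤ (h : ℤ) := (hy v).2.1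
      refine ⟨(c, ⟨(ybar v - 2).toNat, by omega⟩), (c, ⟨(ybar v - 1).toNat, by omega⟩),
        ?_, ?_, ?_⟩
      · exact Or.inl ⟨rfl, Or.inl (by show (ybar v - 2).toNat + 1 = (ybar v - 1).toNat; omega)⟩
      · rw [hlabdef]
        dsimp only
        have hIrow : ((((ybar v - 2).toNat : ℕ) : ℤ)) + 1 = ybar v - 1 := by omega
        rw [hIrow, hc]
        rw [VRGM.labelAt_fill hoccu (by omega) (fun t ht1 ht2 => hgap t ht1 (by omega))]
        exact VRGM.occLabel_bar hd hbu
      · rw [hlabdef]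
        dsimp only
        have hIrow : ((((ybar v - 1).toNat : ℕ) : ℤ)) + 1 = ybar v := by omega
        rw [hIrow, hc, VRGM.labelAt_occ hoccv]
        exact VRGM.occLabel_bar hd hbv
    have claimH : ∀ u v : V, T.graph.Adj u v → ybar u = ybar v → xr u < xl v →
        ∃ pc qc : Fin chosenX.card × Fin h,
          (gridGraph chosenX.card h).Adj pc qc ∧ lab pc = u ∧ lab qc = v := by
      intro u v hadj heq hlr
      have hmb := VRGM.midpt_bounds (h := h) (ybar := ybar) hy hlr
      obtain ⟨hin, hnb⟩ := VRGM.chan_seg hvis hadj heq.symm hlr hmb.1 hmb.2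
      have hch : VRGM.IsChan T.graph ybar vis u v (VRGM.midpt xl xr u v) (ybar u) :=
        ⟨hadj, rfl, heq.symm, hin⟩
      have hoccm : (ybar u) ∈ VRGM.occSet T.graph h ybar xl xr vis (VRGM.midpt xl xr u v) :=
        VRGM.mem_occSet.mpr ⟨by rw [Finset.mem_Icc]; exact ⟨(hy u).1, (hy u).2.1⟩,
          Or.inr ⟨(u, v), hch⟩⟩
      have hmmem : VRGM.midpt xl xr u v ∈ chosenX :=
        hchXmem _ (Or.inr (Or.inr (Or.inr ⟨(u, v), rfl⟩))) ⟨ybar u, hoccm⟩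
      obtain ⟨c, hc⟩ := hxc_surj _ hmmem
      obtain ⟨c', hc'⟩ := hxc_surj _ (hxlv_mem v)
      have hcc' : c < c' := hxc_reflect (by rw [hc, hc']; exact hmb.2)
      have hlt2 : c.val + 1 < chosenX.card := by
        have := c'.2
        have := Fin.lt_def.mp hcc'
        omega
      have hccn : c < (⟨c.val + 1, hlt2⟩ : Fin chosenX.card) := by
        rw [Fin.lt_def]; exact Nat.lt_succ_self c.val
      have hcnle : (⟨c.val + 1, hlt2⟩ : Fin chosenX.card) ≤ c' := by
        rw [Fin.le_def]; show c.val + 1 ≤ c'.val; exact Fin.lt_def.mp hcc'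
      have hmlt : VRGM.midpt xl xr u v < xc ⟨c.val + 1, hlt2⟩ := by
        rw [← hc]; exact hxc_lt hccn
      have hle : xc ⟨c.val + 1, hlt2⟩ ≤ ((xl v : ℝ)) := by
        rw [← hc']; exact hxc_le hcnle
      have hxruv : xr u < xr v := by have := (hy v).2.2; omega
      refine ⟨(c, rU u), (⟨c.val + 1, hlt2⟩, rU u), Or.inr ⟨rfl, Or.inl rfl⟩, ?_, ?_⟩
      · rw [hlabdef]
        dsimp only
        rw [hrUI u, hc, VRGM.labelAt_occ hoccm,
          VRGM.occLabel_chan (h := h) hy hd hx hnb hch]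
        unfold VRGM.chanLab
        rw [if_pos (le_refl _), if_pos hxruv]
      · rcases eq_or_lt_of_le hle with heq2 | hlt2'
        · -- bar cell of v
          have hbv : VRGM.IsBar ybar xl xr v (xc ⟨c.val + 1, hlt2⟩) (ybar u) :=
            ⟨heq, by rw [heq2], by rw [heq2]; exact_mod_cast (hy v).2.2⟩
          have hoccv : (ybar u) ∈ VRGM.occSet T.graph h ybar xl xr vis
              (xc ⟨c.val + 1, hlt2⟩) :=
            VRGM.mem_occSet.mpr ⟨by rw [Finset.mem_Icc]; exact ⟨(hy u).1, (hy u).2.1⟩,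
              Or.inl ⟨v, hbv⟩⟩
          rw [hlabdef]
          dsimp only
          rw [hrUI u, VRGM.labelAt_occ hoccv]
          exact VRGM.occLabel_bar hd hbv
        · -- channel cell labelled v
          have hgt' : ((xr u : ℝ)) < xc ⟨c.val + 1, hlt2⟩ := lt_trans hmb.1 hmlt
          obtain ⟨hin', hnb'⟩ := VRGM.chan_seg hvis hadj heq.symm hlr hgt' hlt2'
          have hch' : VRGM.IsChan T.graph ybar vis u v (xc ⟨c.val + 1, hlt2⟩) (ybar u) :=
            ⟨hadj, rfl, heq.symm, hin'⟩
          have hoccv : (ybar u) ∈ VRGM.occSet T.graph h ybar xl xr vis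
              (xc ⟨c.val + 1, hlt2⟩) :=
            VRGM.mem_occSet.mpr ⟨by rw [Finset.mem_Icc]; exact ⟨(hy u).1, (hy u).2.1⟩,
              Or.inr ⟨(u, v), hch'⟩⟩
          rw [hlabdef]
          dsimp only
          rw [hrUI u, VRGM.labelAt_occ hoccv,
            VRGM.occLabel_chan (h := h) hy hd hx hnb' hch']
          unfold VRGM.chanLab
          rw [if_neg (not_le.mpr hmlt), if_pos hxruv]
    intro u v hadj
    rcases lt_trichotomy (ybar u) (ybar v) with hlt | heq | hgt
    · exact claimV u v hadj hlt
    · rcases VRGM.chan_ranges (h := h) hy hd hadj.ne heq with hr | hr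
      · exact claimH u v hadj heq hr
      · obtain ⟨pc, qc, hadj2, hl1, hl2⟩ := claimH v u hadj.symm heq.symm hr
        exact ⟨qc, pc, hadj2.symm, hl2, hl1⟩
    · obtain ⟨pc, qc, hadj2, hl1, hl2⟩ := claimV v u hadj.symm hgt
      exact ⟨qc, pc, hadj2.symm, hl2, hl1⟩
  · -- simplicity
    intro c v r₁ r₂ r₃ h12 h23 hl1 hl3
    rw [hlabdef] at hl1 hl3 ⊢
    dsimp only at hl1 hl3 ⊢
    exact VRGM.label_convex (by have := Fin.le_def.mp h12; omega)
      (by have := Fin.le_def.mp h23; omega) (hIcc r₁) (hIcc r₂) hl1 hl3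
end
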